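/- Let Q be the quaternion group of order 8 with central involution −1, let q be a nonnegative integer, and let G = Q × (ℤ/2ℤ)^q. For the element y = (−1, 0, …, 0) of G, the number of x ∈ G with x² = y equals (3/4)·|G|; in particular the bound |σ(y)| ≤ (3/4)|G| on the number of square roots of a non-identity element is sharp. -/

import Mathlib

theorem stmt_2 (q : ℕ) :
    let G := QuaternionGroup 2 × Multiplicative (Fin q → ZMod 2)
    let y : G := (QuaternionGroup.a 2, 1)
    4 * (Finset.univ.filter (fun x : G => x ^ 2 = y)).card = 3 * Fintype.card G := by
  intro G y
  have hsq : ∀ b : Multiplicative (Fin q → ZMod 2), b ^ 2 = 1 := by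
    intro b
    have h0 : Multiplicative.toAdd (b ^ 2) = Multiplicative.toAdd (1 : Multiplicative (Fin q → ZMod 2)) := by
      rw [toAdd_pow, toAdd_one]
      funext i
      simp [two_smul, CharTwo.add_self_eq_zero]
    exact Multiplicative.toAdd.injective h0
  have h : (Finset.univ.filter (fun x : G => x ^ 2 = y)) =
      (Finset.univ.filter (fun a : QuaternionGroup 2 => a ^ 2 = QuaternionGroup.a 2)) ×ˢ
        (Finset.univ : Finset (Multiplicative (Fin q → ZMod 2))) := by
    ext x
    simp only [Finset.mem_filter, Finset.mem_product, Finset.mem_univ, true_and, and_true]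
    rw [Prod.pow_def, Prod.ext_iff, Finset.mem_product, Finset.mem_filter]
    simp [hsq, y]
  rw [h, Finset.card_product]
  have h1 : (Finset.univ.filter (fun a : QuaternionGroup 2 => a ^ 2 = QuaternionGroup.a 2)).card = 6 := by
    decide
  rw [h1, Finset.card_univ]
  show 4 * (6 * Fintype.card (Multiplicative (Fin q → ZMod 2))) = 3 * Fintype.card G
  rw [Fintype.card_prod]
  have : Fintype.card (QuaternionGroup 2) = 8 := by decide
  rw [this]
  ring
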